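/- Let T(u) = ∑_{m≥0} 2·(10m+5)!!/((2m+1)!!)⁵ · u^{2m+1} ∈ ℚ[[u]] and let θ = (1/2)·u·d/du. Then T satisfies the inhomogeneous Picard–Fuchs equation θ⁴T − 5u²(5θ+1)(5θ+2)(5θ+3)(5θ+4)T = (15/8)·u. -/

import Mathlib

/-- The operator `θ = (1/2)·u·d/du` on formal power series over `ℚ`: `(θ f)ₙ = (n/2)·fₙ`. -/
noncomputable def theta (f : PowerSeries ℚ) : PowerSeries ℚ :=
  PowerSeries.mk fun n => ((n : ℚ) / 2) * PowerSeries.coeff (R := ℚ) n f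

/-- Walcher's disk potential `T(u) = ∑_{m ≥ 0} 2·(10m+5)!!/((2m+1)!!)⁵ · u^{2m+1}`
(for odd `n = 2m+1` one has `10m+5 = 5n` and `(2m+1)!! = n!!`). -/
noncomputable def T : PowerSeries ℚ :=
  PowerSeries.mk fun n =>
    if n % 2 = 1 then
      2 * (Nat.doubleFactorial (5 * n) : ℚ) / (Nat.doubleFactorial n : ℚ) ^ 5
    else 0

/-- The operator `5θ + a`. -/
noncomputable def A (a : ℚ) (f : PowerSeries ℚ) : PowerSeries ℚ :=
  (5 : ℚ) • theta f + a • f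

lemma coeff_theta (f : PowerSeries ℚ) (n : ℕ) :
    PowerSeries.coeff (R := ℚ) n (theta f) = ((n : ℚ) / 2) * PowerSeries.coeff (R := ℚ) n f := by
  simp [theta]

lemma coeff_A (a : ℚ) (f : PowerSeries ℚ) (n : ℕ) :
    PowerSeries.coeff (R := ℚ) n (A a f) = (5 * ((n : ℚ) / 2) + a) * PowerSeries.coeff (R := ℚ) n f := by
  simp [A, coeff_theta]; ring

lemma df5 (k : ℕ) : (Nat.doubleFactorial (5 * (k + 2)) : ℚ) =
    (5*k+10)*((5*k+8)*((5*k+6)*((5*k+4)*((5*k+2) *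
      (Nat.doubleFactorial (5*k) : ℚ))))) := by
  have h : 5 * (k + 2) = 5*k + 2 + 2 + 2 + 2 + 2 := by ring
  rw [h, Nat.doubleFactorial_add_two, Nat.doubleFactorial_add_two,
    Nat.doubleFactorial_add_two, Nat.doubleFactorial_add_two, Nat.doubleFactorial_add_two]
  push_cast; ring

/-- `T` satisfies the inhomogeneous Picard–Fuchs equation
`θ⁴T − 5u²(5θ+1)(5θ+2)(5θ+3)(5θ+4)T = (15/8)·u`. -/
theorem T_satisfies_inhomogeneous_picard_fuchs :
    theta (theta (theta (theta T))) - 5 * PowerSeries.X ^ 2 * A 1 (A 2 (A 3 (A 4 T))) =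
      PowerSeries.C (R := ℚ) (15 / 8) * PowerSeries.X := by
  have h2 : 5 * PowerSeries.X ^ 2 * A 1 (A 2 (A 3 (A 4 T))) =
      (PowerSeries.C (R := ℚ) 5 * A 1 (A 2 (A 3 (A 4 T)))) * PowerSeries.X ^ 2 := by
    rw [show (PowerSeries.C (R := ℚ) 5 : PowerSeries ℚ) = 5 from map_ofNat _ 5]; ring
  ext n
  rw [map_sub, h2]
  match n with
  | 0 =>
    simp [coeff_theta, T, PowerSeries.coeff_mul_X_pow', PowerSeries.coeff_X]
  | 1 =>
    have : ¬ (2 : ℕ) ≤ 1 := by norm_num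
    rw [PowerSeries.coeff_mul_X_pow']
    simp [coeff_theta, T, PowerSeries.coeff_X, Nat.doubleFactorial]
    norm_num
  | (m+2) =>
    rw [PowerSeries.coeff_mul_X_pow', if_pos (by omega : 2 ≤ m + 2),
      Nat.add_sub_cancel, PowerSeries.coeff_C_mul,
      coeff_theta, coeff_theta, coeff_theta, coeff_theta,
      coeff_A, coeff_A, coeff_A, coeff_A]
    have hX : (PowerSeries.coeff (R := ℚ) (m + 2)) PowerSeries.X = 0 := by
      simp [PowerSeries.coeff_X]
    rw [PowerSeries.coeff_C_mul, hX, mul_zero]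
    rcases Nat.even_or_odd m with he | ho
    · rw [Nat.even_iff] at he
      have h1 : ¬ (m % 2 = 1) := by omega
      have h2 : ¬ ((m + 2) % 2 = 1) := by omega
      simp [T, h1, h2]
    · have h1 : m % 2 = 1 := Nat.odd_iff.mp ho
      have h2 : (m + 2) % 2 = 1 := by omega
      simp only [T, PowerSeries.coeff_mk, h1, h2, if_true]
      rw [df5, Nat.doubleFactorial_add_two]
      have hm : ((Nat.doubleFactorial m : ℚ)) ≠ 0 := by
        exact_mod_cast (Nat.doubleFactorial_pos m).ne'
      have hm2 : ((m : ℚ) + 2) ≠ 0 := by positivity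
      push_cast
      field_simp
      ring
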